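/- There exist constants c, c', c'' > 0 depending only on c₁ and c₂ such that the following holds. Let G = {G_1,…,G_m} be a group structure on [p] with d_g = |G_g| ≤ c₂ n for every g and log m ≤ c'' n, and let X ∈ ℝ^{n×p} have i.i.d. rows distributed as N(0,Θ) with γ_max(Θ) ≤ c₁. Then with probability at least 1 − e^{−c'n}, max_{g∈[m]} γ_max(X_{G_g}^⊤ X_{G_g}/n) ≤ c². -/

import Mathlib

open Finset MeasureTheory ProbabilityTheory

/-- Quadratic form `vᵀAv` of a matrix `A` on `ℝ^p`. -/
def quadForm {p : ℕ} (A : Fin p → Fin p → ℝ) (v : Fin p → ℝ) : ℝ :=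
  ∑ j, ∑ k, v j * A j k * v k

section GroupOpNormAux

open Metric Set Real
open scoped ENNReal NNReal

/-- A `1/2`-net of the Euclidean unit ball with at most `8 ^ dim` points. -/
lemma exists_euclidean_net (ι : Type*) [Fintype ι] :
    ∃ N : Finset (EuclideanSpace ℝ ι),
      (N.card : ℝ) ≤ 8 ^ (Fintype.card ι) ∧
      (∀ y ∈ N, ‖y‖ ≤ 1) ∧
      ∀ v : EuclideanSpace ℝ ι, ‖v‖ ≤ 1 → ∃ y ∈ N, ‖y‖ ≤ 1 ∧ ‖v - y‖ ≤ 1/2 := by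
  classical
  set E := EuclideanSpace ℝ ι
  set d := Fintype.card ι with hd
  set 𝒮 : Set (Set E) := {S | S ⊆ closedBall 0 1 ∧ S.Pairwise fun x y => 1/2 ≤ dist x y} with h𝒮
  obtain ⟨M, hMmax⟩ : ∃ M, Maximal (fun S => S ∈ 𝒮) M := by
    apply zorn_subset
    intro c hc hchain
    refine ⟨⋃₀ c, ⟨?_, ?_⟩, fun s hs => subset_sUnion_of_mem hs⟩
    · exact sUnion_subset fun s hs => (hc hs).1
    · intro x hx y hy hxy
      obtain ⟨s, hs, hxs⟩ := hx
      obtain ⟨t, ht, hyt⟩ := hy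
      rcases hchain.total hs ht with h | h
      · exact (hc ht).2 (h hxs) hyt hxy
      · exact (hc hs).2 hxs (h hyt) hxy
  have hMball : M ⊆ closedBall 0 1 := hMmax.prop.1
  have hMsep : M.Pairwise fun x y => 1/2 ≤ dist x y := hMmax.prop.2
  have hcard : ∀ F : Finset E, ↑F ⊆ M → (F.card : ℝ) ≤ 8 ^ d := by
    intro F hF
    have hdisj : (↑F : Set E).PairwiseDisjoint fun x => ball x 4⁻¹ := by
      intro x hx y hy hxy
      refine ball_disjoint_ball ?_
      have := hMsep (hF hx) (hF hy) hxy
      linarith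
    have hsub : (⋃ x ∈ F, ball x 4⁻¹) ⊆ ball (0 : E) 2 := by
      refine iUnion₂_subset fun x hx => ?_
      intro z hz
      have hx1 : ‖x‖ ≤ 1 := mem_closedBall_zero_iff.mp (hMball (hF hx))
      have h1 : dist z x < 4⁻¹ := hz
      show dist z (0 : E) < 2
      calc dist z 0 ≤ dist z x + dist x 0 := dist_triangle _ _ _
        _ < 2 := by
            have : dist x 0 ≤ 1 := by simpa [dist_zero_right] using hx1
            linarith
    have hmeas : ∀ x ∈ F, MeasurableSet (ball x (4⁻¹:ℝ)) := fun x _ => measurableSet_ball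
    have hsum : ∑ x ∈ F, volume (ball x (4⁻¹:ℝ)) ≤ volume (ball (0:E) 2) := by
      rw [← measure_biUnion_finset hdisj hmeas]
      exact measure_mono hsub
    set B := volume (ball (0:E) 1) with hB
    have hB0 : B ≠ 0 := (measure_ball_pos _ _ one_pos).ne'
    have hBtop : B ≠ ⊤ := measure_ball_lt_top.ne
    have hballx : ∀ x : E, volume (ball x (4⁻¹:ℝ)) = ENNReal.ofReal ((4⁻¹:ℝ) ^ d) * B := by
      intro x
      rw [Measure.addHaar_ball_of_pos _ x (by norm_num : (0:ℝ) < 4⁻¹)]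
      congr 2
      rw [finrank_euclideanSpace]
    have hball2 : volume (ball (0:E) 2) = ENNReal.ofReal ((2:ℝ) ^ d) * B := by
      rw [Measure.addHaar_ball_of_pos _ _ (by norm_num : (0:ℝ) < 2)]
      congr 2
      rw [finrank_euclideanSpace]
    rw [hball2] at hsum
    simp only [hballx, Finset.sum_const, nsmul_eq_mul] at hsum
    have h2 : ENNReal.ofReal ((2:ℝ) ^ d)
        = ENNReal.ofReal ((8:ℝ) ^ d) * ENNReal.ofReal ((4⁻¹:ℝ) ^ d) := by
      rw [← ENNReal.ofReal_mul (by positivity)]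
      congr 1
      rw [← mul_pow]
      norm_num
    rw [h2, mul_assoc] at hsum
    have hc0 : ENNReal.ofReal ((4⁻¹:ℝ) ^ d) * B ≠ 0 :=
      mul_ne_zero (ENNReal.ofReal_pos.mpr (by positivity)).ne' hB0
    have hctop : ENNReal.ofReal ((4⁻¹:ℝ) ^ d) * B ≠ ⊤ :=
      ENNReal.mul_ne_top ENNReal.ofReal_ne_top hBtop
    have hle : (F.card : ℝ≥0∞) ≤ ENNReal.ofReal ((8:ℝ) ^ d) :=
      (ENNReal.mul_le_mul_iff_left hc0 hctop).mp hsum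
    rw [← ENNReal.ofReal_natCast, ENNReal.ofReal_le_ofReal_iff (by positivity)] at hle
    exact hle
  have hMfin : M.Finite := by
    by_contra hinf
    rw [← Set.not_infinite, not_not] at hinf
    obtain ⟨F, hFsub, hFcard⟩ := hinf.exists_subset_card_eq (⌈(8:ℝ)^d⌉₊ + 1)
    have := hcard F hFsub
    rw [hFcard] at this
    have h8 : (8:ℝ)^d ≤ (⌈(8:ℝ)^d⌉₊ : ℝ) := Nat.le_ceil _
    push_cast at this
    linarith
  refine ⟨hMfin.toFinset, ?_, ?_, ?_⟩
  · apply hcard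
    simp [Set.Finite.coe_toFinset]
  · intro y hy
    exact mem_closedBall_zero_iff.mp (hMball (hMfin.mem_toFinset.mp hy))
  · intro v hv
    by_cases hvM : ∃ y ∈ M, dist v y < 1/2
    · obtain ⟨y, hyM, hy⟩ := hvM
      exact ⟨y, hMfin.mem_toFinset.mpr hyM, mem_closedBall_zero_iff.mp (hMball hyM),
        by rw [← dist_eq_norm]; linarith⟩
    · push_neg at hvM
      have hvmem : v ∈ M := by
        by_contra hvnot
        have hins : insert v M ∈ 𝒮 := by
          constructor
          · exact Set.insert_subset (mem_closedBall_zero_iff.mpr hv) hMball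
          · exact Set.pairwise_insert.mpr ⟨hMsep, fun y hy _ =>
              ⟨hvM y hy, by rw [dist_comm]; exact hvM y hy⟩⟩
        have := hMmax.2 hins (Set.subset_insert _ _)
        exact hvnot (this (Set.mem_insert _ _))
      exact ⟨v, hMfin.mem_toFinset.mpr hvmem, mem_closedBall_zero_iff.mp (hMball hvmem),
        by simp⟩

/-- Exponential square moment of a centered Gaussian with variance at most `c₁`. -/
lemma gaussian_sq_exp (c₁ : ℝ) (hc₁ : 0 < c₁) (w : ℝ≥0) (hw : (w:ℝ) ≤ c₁) :
    Integrable (fun x => Real.exp (1/(4*c₁) * x ^ 2)) (gaussianReal 0 w) ∧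
    ∫ x, Real.exp (1/(4*c₁) * x ^ 2) ∂(gaussianReal 0 w) ≤ Real.sqrt 2 := by
  have h1le : (1:ℝ) ≤ Real.sqrt 2 := by
    rw [show (1:ℝ) = Real.sqrt 1 by simp]
    exact Real.sqrt_le_sqrt (by norm_num)
  by_cases hv : w = 0
  · subst hv
    rw [gaussianReal_zero_var]
    refine ⟨(integrable_const _).congr (ae_eq_dirac _).symm, ?_⟩
    rw [integral_dirac]
    simpa using h1le
  · set v : ℝ := (w : ℝ) with hvdef
    have hv0 : 0 < v := by
      have : 0 < w := lt_of_le_of_ne zero_le (Ne.symm hv)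
      exact_mod_cast this
    set f : ℝ → ℝ := fun x => Real.exp (1/(4*c₁) * x ^ 2) with hf
    set φ : ℝ → ℝ≥0 := fun x => (gaussianPDFReal 0 w x).toNNReal with hφ
    have hφmeas : Measurable φ := (measurable_gaussianPDFReal 0 w).real_toNNReal
    have hGw : gaussianReal 0 w = volume.withDensity (fun x => (φ x : ℝ≥0∞)) := by
      rw [gaussianReal_of_var_ne_zero 0 hv]
      rfl
    set C : ℝ := 1 / Real.sqrt (2 * π * v) with hC
    have hC0 : 0 < C := by
      rw [hC]
      positivity
    have hsq2 : Real.sqrt (2 * π * v) ≠ 0 := by positivity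
    have hpdf : ∀ x, gaussianPDFReal 0 w x = C * Real.exp (-x^2 / (2*v)) := by
      intro x
      rw [gaussianPDFReal]
      simp [hC, hvdef]
    have hptw : ∀ x : ℝ, φ x • f x ≤ C * Real.exp (-(1/(4*v)) * x^2) := by
      intro x
      have hφval : (φ x : ℝ) = gaussianPDFReal 0 w x :=
        Real.coe_toNNReal _ (gaussianPDFReal_nonneg 0 w x)
      rw [NNReal.smul_def, smul_eq_mul, hφval, hpdf, hf]
      rw [mul_assoc, ← Real.exp_add]
      apply mul_le_mul_of_nonneg_left _ hC0.le
      rw [Real.exp_le_exp]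
      have hx2 : (0:ℝ) ≤ x^2 := sq_nonneg x
      have hinv : 1/(4*c₁) ≤ 1/(4*v) := by
        apply one_div_le_one_div_of_le (by linarith) (by linarith)
      have h1 : -x^2/(2*v) + 1/(4*c₁) * x^2 ≤ -x^2/(2*v) + 1/(4*v) * x^2 := by
        nlinarith
      have h2 : -x^2/(2*v) + 1/(4*v) * x^2 = -(1/(4*v)) * x^2 := by
        field_simp
        ring
      linarith
    have hgint : Integrable (fun x => C * Real.exp (-(1/(4*v)) * x^2)) volume :=
      (integrable_exp_neg_mul_sq (by positivity : (0:ℝ) < 1/(4*v))).const_mul C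
    have hmeasf : AEStronglyMeasurable (fun x => φ x • f x) volume := by
      apply AEStronglyMeasurable.smul hφmeas.aestronglyMeasurable
      exact (Continuous.aestronglyMeasurable (by continuity))
    have hφf_int : Integrable (fun x => φ x • f x) volume := by
      refine hgint.mono' hmeasf (ae_of_all _ fun x => ?_)
      rw [Real.norm_eq_abs, abs_of_nonneg]
      · exact hptw x
      · have := (φ x).coe_nonneg
        rw [NNReal.smul_def, smul_eq_mul]
        positivity
    constructor
    · rw [hGw, integrable_withDensity_iff_integrable_smul hφmeas]
      exact hφf_int
    · rw [hGw, integral_withDensity_eq_integral_smul hφmeas]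
      have hle : ∫ x, φ x • f x ≤ ∫ x, C * Real.exp (-(1/(4*v)) * x^2) :=
        integral_mono hφf_int hgint hptw
      have hval : ∫ x : ℝ, C * Real.exp (-(1/(4*v)) * x^2) = Real.sqrt 2 := by
        rw [integral_const_mul, integral_gaussian]
        have h4 : π / (1/(4*v)) = 2 * (2 * π * v) := by
          field_simp
          ring
        rw [h4, Real.sqrt_mul (by norm_num : (0:ℝ) ≤ 2)]
        rw [hC]
        field_simp
      linarith

/-- a.e. modification preserves independence of a family of real random variables. -/
lemma iIndepFun_ae_eq' {Ω ι : Type*} {mΩ : MeasurableSpace Ω} {P : Measure Ω}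
    {f g : ι → Ω → ℝ} (hf : iIndepFun f P)
    (h : ∀ i, f i =ᵐ[P] g i) : iIndepFun g P := by
  rw [iIndepFun_iff_measure_inter_preimage_eq_mul] at hf ⊢
  intro S sets hsets
  have hae : ∀ᵐ ω ∂P, ∀ i ∈ S, f i ω = g i ω :=
    (MeasureTheory.ae_ball_iff S.countable_toSet).mpr fun i _ => h i
  have h1 : (⋂ i ∈ S, g i ⁻¹' sets i) =ᵐ[P] (⋂ i ∈ S, f i ⁻¹' sets i) := by
    rw [Filter.eventuallyEq_set]
    filter_upwards [hae] with ω hω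
    simp only [Set.mem_iInter, Set.mem_preimage]
    exact ⟨fun hh i hi => by rw [hω i hi]; exact hh i hi,
      fun hh i hi => by rw [← hω i hi]; exact hh i hi⟩
  rw [measure_congr h1, hf S hsets]
  refine Finset.prod_congr rfl fun i hi => ?_
  apply measure_congr
  rw [Filter.eventuallyEq_set]
  filter_upwards [h i] with ω hω
  simp only [Set.mem_preimage]
  rw [hω]

/-- Chernoff bound for a sum of squares of independent centered Gaussians. -/
lemma chernoff_bad {Ω : Type*} {mΩ : MeasurableSpace Ω} {P : Measure Ω} [IsProbabilityMeasure P]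
    {n : ℕ} (Z : Fin n → Ω → ℝ)
    (hindep : iIndepFun (fun i ω => (Z i ω)^2) P)
    (c₁ : ℝ) (hc₁ : 0 < c₁)
    (w : Fin n → ℝ≥0) (hw : ∀ i, (w i : ℝ) ≤ c₁)
    (hmap : ∀ i, Measure.map (Z i) P = gaussianReal 0 (w i))
    (K : ℝ) :
    P {ω | K * n ≤ ∑ i, (Z i ω)^2}
      ≤ ENNReal.ofReal (Real.exp (-(1/(4*c₁)) * (K*n)) * (Real.sqrt 2)^n) := by
  set lam : ℝ := 1/(4*c₁) with hlam
  have hlam0 : 0 < lam := by rw [hlam]; positivity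
  have haem : ∀ i, AEMeasurable (Z i) P := by
    intro i
    by_contra hae
    have h0 := hmap i
    rw [Measure.map_of_not_aemeasurable hae] at h0
    have : (0 : Measure ℝ) Set.univ = (gaussianReal 0 (w i)) Set.univ := by rw [h0]
    simp [measure_univ] at this
  set L : Fin n → Ω → ℝ := fun i => (haem i).mk (Z i) with hL
  have hLmeas : ∀ i, Measurable (L i) := fun i => (haem i).measurable_mk
  have hLae : ∀ i, Z i =ᵐ[P] L i := fun i => (haem i).ae_eq_mk
  set M : Fin n → Ω → ℝ := fun i ω => (L i ω)^2 with hM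
  have hMmeas : ∀ i, Measurable (M i) := fun i => (hLmeas i).pow_const 2
  have hae2 : ∀ i, (fun ω => (Z i ω)^2) =ᵐ[P] M i := by
    intro i
    filter_upwards [hLae i] with ω hω
    simp [hM, hω]
  have hindepM : iIndepFun M P := iIndepFun_ae_eq' hindep hae2
  have hmapL : ∀ i, Measure.map (L i) P = gaussianReal 0 (w i) := by
    intro i
    rw [← Measure.map_congr (hLae i)]
    exact hmap i
  have hint : ∀ i, Integrable (fun ω => Real.exp (lam * M i ω)) P := by
    intro i
    have h1 := (gaussian_sq_exp c₁ hc₁ (w i) (hw i)).1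
    rw [← hmapL i] at h1
    rw [integrable_map_measure h1.aestronglyMeasurable (hLmeas i).aemeasurable] at h1
    exact h1
  have hmgf : ∀ i, mgf (M i) P lam ≤ Real.sqrt 2 := by
    intro i
    have h2 := (gaussian_sq_exp c₁ hc₁ (w i) (hw i)).2
    rw [← hmapL i] at h2
    rw [integral_map (hLmeas i).aemeasurable
      (Continuous.aestronglyMeasurable (by continuity))] at h2
    exact h2
  have hintsum : Integrable (fun ω => Real.exp (lam * (∑ i, M i) ω)) P :=
    hindepM.integrable_exp_mul_sum hMmeas (fun i _ => hint i)
  have hchern := measure_ge_le_exp_mul_mgf (μ := P) (X := ∑ i, M i) (K * n) hlam0.le hintsum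
  have hmgfsum : mgf (∑ i, M i) P lam ≤ (Real.sqrt 2)^n := by
    rw [hindepM.mgf_sum hMmeas]
    calc ∏ i, mgf (M i) P lam ≤ ∏ _i : Fin n, Real.sqrt 2 :=
          Finset.prod_le_prod (fun i _ => mgf_nonneg) (fun i _ => hmgf i)
      _ = (Real.sqrt 2)^n := by simp
  have hsetseq : P {ω | K * n ≤ ∑ i, (Z i ω)^2} = P {ω | K * n ≤ (∑ i, M i) ω} := by
    apply measure_congr
    rw [Filter.eventuallyEq_set]
    have hall : ∀ᵐ ω ∂P, ∀ i, Z i ω = L i ω :=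
      (MeasureTheory.ae_all_iff).mpr fun i => hLae i
    filter_upwards [hall] with ω hω
    simp only [Set.mem_setOf_eq, Finset.sum_apply]
    have hsum_eq : ∑ i, (Z i ω)^2 = ∑ i, M i ω :=
      Finset.sum_congr rfl fun i _ => by simp [hM, hω i]
    rw [hsum_eq]
  rw [hsetseq]
  rw [ENNReal.le_ofReal_iff_toReal_le (measure_ne_top _ _) (by positivity)]
  calc (P {ω | K * n ≤ (∑ i, M i) ω}).toReal
      ≤ Real.exp (-lam * (K * n)) * mgf (∑ i, M i) P lam := hchern
    _ ≤ Real.exp (-lam * (K * n)) * (Real.sqrt 2)^n := by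
        apply mul_le_mul_of_nonneg_left hmgfsum (Real.exp_nonneg _)
    _ = Real.exp (-(1/(4*c₁)) * (K*n)) * (Real.sqrt 2)^n := by rw [hlam]

/-- From a bound on a net to a bound on the operator norm. -/
lemma net_opnorm {E F : Type*} [NormedAddCommGroup E] [NormedSpace ℝ E]
    [NormedAddCommGroup F] [NormedSpace ℝ F]
    (T : E →L[ℝ] F) (N : Finset E)
    (hnet : ∀ v : E, ‖v‖ ≤ 1 → ∃ y ∈ N, ‖y‖ ≤ 1 ∧ ‖v - y‖ ≤ 1/2)
    {B : ℝ} (hB : 0 ≤ B) (hbound : ∀ y ∈ N, ‖T y‖ ≤ B) :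
    ∀ v : E, ‖T v‖ ≤ 2 * B * ‖v‖ := by
  have hop : ‖T‖ ≤ B + ‖T‖ / 2 := by
    apply T.opNorm_le_bound (by positivity)
    intro v
    rcases eq_or_ne v 0 with rfl | hv
    · simp
    · have hnv : 0 < ‖v‖ := norm_pos_iff.mpr hv
      set u : E := ‖v‖⁻¹ • v with hu_def
      have hu : ‖u‖ = 1 := by
        rw [hu_def, norm_smul, norm_inv, norm_norm, inv_mul_cancel₀ hnv.ne']
      obtain ⟨y, hyN, _, hvy⟩ := hnet u hu.le
      have hTu : ‖T u‖ ≤ B + ‖T‖ / 2 := by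
        have key : y + (u - y) = u := by abel
        have h1 : ‖T u‖ ≤ ‖T y‖ + ‖T (u - y)‖ := by
          calc ‖T u‖ = ‖T y + T (u - y)‖ := by rw [← map_add, key]
            _ ≤ ‖T y‖ + ‖T (u - y)‖ := norm_add_le _ _
        have h2 : ‖T (u - y)‖ ≤ ‖T‖ * ‖u - y‖ := T.le_opNorm _
        have h3 : ‖T‖ * ‖u - y‖ ≤ ‖T‖ * (1/2) :=
          mul_le_mul_of_nonneg_left hvy (norm_nonneg _)
        have h4 := hbound y hyN
        linarith
      have hTv : T v = ‖v‖ • T u := by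
        rw [hu_def, _root_.map_smul, smul_smul, mul_inv_cancel₀ hnv.ne', one_smul]
      rw [hTv, norm_smul, norm_norm, mul_comm]
      exact mul_le_mul_of_nonneg_right hTu hnv.le
  have hopB : ‖T‖ ≤ 2 * B := by linarith
  intro v
  calc ‖T v‖ ≤ ‖T‖ * ‖v‖ := T.le_opNorm v
    _ ≤ 2 * B * ‖v‖ := mul_le_mul_of_nonneg_right hopB (norm_nonneg _)

/-- The continuous linear map given by a matrix with rows `A i`. -/
noncomputable def rowCLM {ι : Type*} [Fintype ι] {n : ℕ} (A : Fin n → ι → ℝ) :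
    EuclideanSpace ℝ ι →L[ℝ] EuclideanSpace ℝ (Fin n) :=
  LinearMap.toContinuousLinearMap
    { toFun := fun w => WithLp.toLp 2 (fun i => ∑ j, A i j * w j)
      map_add' := by
        intro w₁ w₂
        ext i
        simp only [PiLp.add_apply]
        rw [← Finset.sum_add_distrib]
        exact Finset.sum_congr rfl fun j _ => by ring
      map_smul' := by
        intro c w
        ext i
        simp only [PiLp.smul_apply, RingHom.id_apply, smul_eq_mul, Finset.mul_sum]
        exact Finset.sum_congr rfl fun j _ => by ring }

lemma rowCLM_apply {ι : Type*} [Fintype ι] {n : ℕ} (A : Fin n → ι → ℝ)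
    (w : EuclideanSpace ℝ ι) (i : Fin n) : rowCLM A w i = ∑ j, A i j * w j := rfl

lemma euclid_norm_sq {ι : Type*} [Fintype ι] (x : EuclideanSpace ℝ ι) :
    ‖x‖^2 = ∑ j, x j ^ 2 := by
  rw [EuclideanSpace.norm_eq, Real.sq_sqrt (Finset.sum_nonneg fun j _ => by positivity)]
  exact Finset.sum_congr rfl fun j _ => by rw [Real.norm_eq_abs, sq_abs]

lemma sum_dite_mem {p : ℕ} (s : Finset (Fin p)) (f : ∀ j, j ∈ s → ℝ) :
    ∑ j, (if h : j ∈ s then f j h else 0) = ∑ j : ↥s, f ↑j j.2 := by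
  classical
  rw [← Finset.sum_subset (Finset.subset_univ s) (fun x _ hx => dif_neg hx)]
  rw [Finset.univ_eq_attach, ← Finset.sum_attach s (fun j => if h : j ∈ s then f j h else 0)]
  exact Finset.sum_congr rfl fun j _ => dif_pos j.2

lemma sum_coe_mem {p : ℕ} (s : Finset (Fin p)) (f : Fin p → ℝ) :
    ∑ j ∈ s, f j = ∑ j : ↥s, f ↑j := by
  rw [Finset.univ_eq_attach, Finset.sum_attach s f]

end GroupOpNormAux

/-- for a Gaussian random design with i.i.d. rows `N(0,Θ)`,
`γ_max(Θ) ≤ c₁`, group sizes `d_g ≤ c₂ n`, and `log m ≤ c'' n`, with probability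
at least `1 − e^{−c'n}` all groupwise sample covariance blocks satisfy
`γ_max(X_{G_g}ᵀX_{G_g}/n) ≤ c²`, where `c, c', c''` depend only on `c₁, c₂`.
(For symmetric matrices, the eigenvalue bounds are expressed through the
associated quadratic forms.) -/
theorem group_operator_norm_bound :
    ∀ c₁ c₂ : ℝ, 0 < c₁ → 0 < c₂ →
    ∃ c c' c'' : ℝ, 0 < c ∧ 0 < c' ∧ 0 < c'' ∧
      ∀ (n p m : ℕ) (G : Fin m → Finset (Fin p)),
        (∀ j : Fin p, ∃ g, j ∈ G g) →
        (∀ g, ((G g).card : ℝ) ≤ c₂ * n) →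
        Real.log m ≤ c'' * n →
        ∀ (Θ : Fin p → Fin p → ℝ),
          (∀ j k, Θ j k = Θ k j) →
          (∀ v : Fin p → ℝ, 0 ≤ quadForm Θ v ∧ quadForm Θ v ≤ c₁ * ∑ j, v j ^ 2) →
        ∀ (Ω : Type) (_ : MeasurableSpace Ω) (P : Measure Ω),
          IsProbabilityMeasure P →
          ∀ (X : Ω → Fin n → Fin p → ℝ),
          (∀ (i : Fin n) (t : Fin p → ℝ),
            Measure.map (fun ω => ∑ j, t j * X ω i j) P
              = gaussianReal 0 (Real.toNNReal (quadForm Θ t))) →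
          iIndepFun (fun i ω => X ω i) P →
          ENNReal.ofReal (1 - Real.exp (-(c' * n)))
            ≤ P {ω | ∀ g : Fin m, ∀ v : Fin p → ℝ,
                (∑ i, (∑ j ∈ G g, X ω i j * v j) ^ 2) / n ≤ c ^ 2 * ∑ j ∈ G g, v j ^ 2} := by
  intro c₁ c₂ hc₁ hc₂
  classical
  have hlog8 : 0 < Real.log 8 := Real.log_pos (by norm_num)
  have hsqrt2 : (1:ℝ) < Real.sqrt 2 := by
    rw [show (1:ℝ) = Real.sqrt 1 by simp]
    exact Real.sqrt_lt_sqrt (by norm_num) (by norm_num)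
  have hsqrt2pos : (0:ℝ) < Real.sqrt 2 := by linarith
  have hlogsqrt2 : 0 < Real.log (Real.sqrt 2) := Real.log_pos hsqrt2
  set a : ℝ := 2 + c₂ * Real.log 8 with ha_def
  have ha0 : 0 < a := by positivity
  set K : ℝ := 4 * c₁ * (a + Real.log (Real.sqrt 2)) with hK_def
  have hK0 : 0 < K := by positivity
  have hlamK : (1/(4*c₁)) * K = a + Real.log (Real.sqrt 2) := by
    rw [hK_def]
    field_simp
  refine ⟨2 * Real.sqrt K, 1, 1, by positivity, one_pos, one_pos, ?_⟩
  intro n p m G hcover hGcard hlogm Θ hsymm hquad Ω mΩ P hP X hXmap hXindep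
  haveI := hP
  rcases Nat.eq_zero_or_pos n with hn0 | hn
  · subst hn0
    simp
  have hnR : (0:ℝ) < n := by exact_mod_cast hn
  -- the nets
  choose N hNcard hNmem hNnet using fun g : Fin m => exists_euclidean_net (↥(G g))
  -- embedding of group vectors into ℝ^p
  set tm : ∀ g : Fin m, EuclideanSpace ℝ (↥(G g)) → Fin p → ℝ :=
    fun g y j => if h : j ∈ G g then y ⟨j, h⟩ else 0 with htm_def
  have hsum1 : ∀ (g : Fin m) (y : EuclideanSpace ℝ (↥(G g))) (r : Fin p → ℝ),
      ∑ j, tm g y j * r j = ∑ j : ↥(G g), r ↑j * y j := by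
    intro g y r
    have h : ∀ j : Fin p, tm g y j * r j = if h : j ∈ G g then r j * y ⟨j, h⟩ else 0 := by
      intro j
      by_cases h : j ∈ G g
      · simp [htm_def, h, mul_comm]
      · simp [htm_def, h]
    rw [Finset.sum_congr rfl fun j _ => h j]
    exact sum_dite_mem (G g) (fun j h => r j * y ⟨j, h⟩)
  have hsum3 : ∀ (g : Fin m) (y : EuclideanSpace ℝ (↥(G g))),
      ∑ j, tm g y j ^ 2 = ∑ j : ↥(G g), y j ^ 2 := by
    intro g y
    have h : ∀ j : Fin p, tm g y j ^ 2 = if h : j ∈ G g then y ⟨j, h⟩ ^ 2 else 0 := by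
      intro j
      by_cases h : j ∈ G g <;> simp [htm_def, h]
    rw [Finset.sum_congr rfl fun j _ => h j]
    exact sum_dite_mem (G g) (fun j h => y ⟨j, h⟩ ^ 2)
  -- variance bound at net points
  have hvar : ∀ (g : Fin m) (y : EuclideanSpace ℝ (↥(G g))), ‖y‖ ≤ 1 →
      ((Real.toNNReal (quadForm Θ (tm g y)) : ℝ)) ≤ c₁ := by
    intro g y hy
    have h1 : quadForm Θ (tm g y) ≤ c₁ * ∑ j, tm g y j ^ 2 := (hquad (tm g y)).2
    have h2 : ∑ j, tm g y j ^ 2 = ‖y‖ ^ 2 := by rw [hsum3, euclid_norm_sq]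
    have h3 : ‖y‖ ^ 2 ≤ 1 := by nlinarith [norm_nonneg y]
    have h4 : quadForm Θ (tm g y) ≤ c₁ := by nlinarith
    rw [Real.coe_toNNReal']
    exact max_le h4 hc₁.le
  -- bad events and their probabilities
  set Bad : ∀ g : Fin m, EuclideanSpace ℝ (↥(G g)) → Set Ω :=
    fun g y => {ω | K * n ≤ ∑ i, (∑ j, tm g y j * X ω i j) ^ 2} with hBad_def
  have hBadP : ∀ (g : Fin m), ∀ y ∈ N g,
      P (Bad g y) ≤ ENNReal.ofReal (Real.exp (-(a * n))) := by
    intro g y hy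
    have hynorm : ‖y‖ ≤ 1 := hNmem g y hy
    set Z : Fin n → Ω → ℝ := fun i ω => ∑ j, tm g y j * X ω i j with hZ_def
    have hindepZ : iIndepFun (fun i ω => (Z i ω)^2) P := by
      have hφmeas : ∀ i : Fin n, Measurable (fun r : Fin p → ℝ => (∑ j, tm g y j * r j)^2) := by
        intro i
        apply Measurable.pow_const
        exact Finset.univ.measurable_sum fun j _ => (measurable_pi_apply j).const_mul _
      exact hXindep.comp _ hφmeas
    have hchern := chernoff_bad Z hindepZ c₁ hc₁
      (fun _ => Real.toNNReal (quadForm Θ (tm g y))) (fun _ => hvar g y hynorm)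
      (fun i => hXmap i (tm g y)) K
    refine le_trans hchern (le_of_eq ?_)
    congr 1
    rw [show (Real.sqrt 2)^n = Real.exp (n * Real.log (Real.sqrt 2)) by
      rw [← Real.exp_log hsqrt2pos, ← Real.exp_nat_mul, Real.exp_log hsqrt2pos,
        Real.exp_nat_mul, Real.exp_log hsqrt2pos]]
    rw [← Real.exp_add]
    congr 1
    have : -(1/(4*c₁)) * (K * n) = -((1/(4*c₁)) * K) * n := by ring
    rw [this, hlamK]
    ring
  -- union bound
  set BadAll : Set Ω := ⋃ g : Fin m, ⋃ y ∈ N g, Bad g y with hBadAll_def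
  have hBadAllP : P BadAll ≤ ENNReal.ofReal (Real.exp (-((1:ℝ) * n))) := by
    have hg : ∀ g : Fin m, P (⋃ y ∈ N g, Bad g y) ≤ ENNReal.ofReal (Real.exp (-(2 * n))) := by
      intro g
      calc P (⋃ y ∈ N g, Bad g y) ≤ ∑ y ∈ N g, P (Bad g y) := measure_biUnion_finset_le _ _
        _ ≤ ∑ _y ∈ N g, ENNReal.ofReal (Real.exp (-(a * n))) :=
            Finset.sum_le_sum fun y hy => hBadP g y hy
        _ = (N g).card * ENNReal.ofReal (Real.exp (-(a * n))) := by
            rw [Finset.sum_const, nsmul_eq_mul]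
        _ ≤ ENNReal.ofReal (Real.exp (c₂ * Real.log 8 * n)) *
              ENNReal.ofReal (Real.exp (-(a * n))) := by
            apply mul_le_mul_left
            rw [← ENNReal.ofReal_natCast]
            apply ENNReal.ofReal_le_ofReal
            calc ((N g).card : ℝ) ≤ 8 ^ (Fintype.card ↥(G g)) := hNcard g
              _ = Real.exp ((Fintype.card ↥(G g)) * Real.log 8) := by
                  rw [← Real.exp_log (show (0:ℝ) < 8 by norm_num), ← Real.exp_nat_mul,
                    Real.exp_log (show (0:ℝ) < 8 by norm_num),
                    Real.exp_nat_mul, Real.exp_log (show (0:ℝ) < 8 by norm_num)]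
              _ ≤ Real.exp (c₂ * Real.log 8 * n) := by
                  apply Real.exp_le_exp.mpr
                  have hcard : ((G g).card : ℝ) ≤ c₂ * n := hGcard g
                  have : (Fintype.card ↥(G g) : ℝ) = ((G g).card : ℝ) := by
                    rw [Fintype.card_coe]
                  rw [this]
                  nlinarith [hlog8.le]
        _ = ENNReal.ofReal (Real.exp (c₂ * Real.log 8 * n) * Real.exp (-(a * n))) := by
            rw [ENNReal.ofReal_mul (Real.exp_nonneg _)]
        _ = ENNReal.ofReal (Real.exp (-(2 * n))) := by
            rw [← Real.exp_add]
            congr 1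
            rw [ha_def]
            ring
    calc P BadAll ≤ ∑ g : Fin m, P (⋃ y ∈ N g, Bad g y) := measure_iUnion_fintype_le _ _
      _ ≤ ∑ _g : Fin m, ENNReal.ofReal (Real.exp (-(2 * n))) := Finset.sum_le_sum fun g _ => hg g
      _ = (m : ENNReal) * ENNReal.ofReal (Real.exp (-(2 * n))) := by
          rw [Finset.sum_const, nsmul_eq_mul, Finset.card_univ, Fintype.card_fin]
      _ ≤ ENNReal.ofReal (Real.exp ((1:ℝ) * n)) * ENNReal.ofReal (Real.exp (-(2 * n))) := by
          apply mul_le_mul_left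
          rw [← ENNReal.ofReal_natCast]
          apply ENNReal.ofReal_le_ofReal
          rcases Nat.eq_zero_or_pos m with hm0 | hm
          · subst hm0
            simp [Real.exp_nonneg]
          · have hmR : (0:ℝ) < m := by exact_mod_cast hm
            calc (m:ℝ) = Real.exp (Real.log m) := (Real.exp_log hmR).symm
              _ ≤ Real.exp ((1:ℝ) * n) := Real.exp_le_exp.mpr hlogm
      _ = ENNReal.ofReal (Real.exp ((1:ℝ) * n) * Real.exp (-(2 * n))) := by
          rw [ENNReal.ofReal_mul (Real.exp_nonneg _)]
      _ = ENNReal.ofReal (Real.exp (-((1:ℝ) * n))) := by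
          rw [← Real.exp_add]
          congr 1
          ring
  -- inclusion: complement of the bad event is inside the good event
  have hinc : BadAllᶜ ⊆ {ω | ∀ g : Fin m, ∀ v : Fin p → ℝ,
      (∑ i, (∑ j ∈ G g, X ω i j * v j) ^ 2) / n ≤ (2 * Real.sqrt K) ^ 2 * ∑ j ∈ G g, v j ^ 2} := by
    intro ω hω g v
    have hωg : ∀ y ∈ N g, ¬ (K * n ≤ ∑ i, (∑ j, tm g y j * X ω i j) ^ 2) := by
      intro y hy hKle
      exact hω (Set.mem_iUnion.mpr ⟨g, Set.mem_iUnion₂.mpr ⟨y, hy, hKle⟩⟩)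
    set T := rowCLM (fun (i : Fin n) (j : ↥(G g)) => X ω i ↑j) with hT_def
    have hTnorm : ∀ w : EuclideanSpace ℝ (↥(G g)),
        ‖T w‖^2 = ∑ i, (∑ j : ↥(G g), X ω i ↑j * w j)^2 := by
      intro w
      rw [euclid_norm_sq]
      exact Finset.sum_congr rfl fun i _ => by rw [hT_def, rowCLM_apply]
    have hbound : ∀ y ∈ N g, ‖T y‖ ≤ Real.sqrt (K * n) := by
      intro y hy
      have h1 : ∑ i, (∑ j, tm g y j * X ω i j) ^ 2 ≤ K * n := (not_le.mp (hωg y hy)).le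
      have h2 : ‖T y‖^2 ≤ K * n := by
        rw [hTnorm]
        calc ∑ i, (∑ j : ↥(G g), X ω i ↑j * y j)^2
            = ∑ i, (∑ j, tm g y j * X ω i j)^2 := by
              refine Finset.sum_congr rfl fun i _ => ?_
              congr 1
              exact (hsum1 g y (fun j => X ω i j)).symm
          _ ≤ K * n := h1
      rw [← Real.sqrt_sq (norm_nonneg (T y))]
      exact Real.sqrt_le_sqrt h2
    have hop := net_opnorm T (N g) (hNnet g) (Real.sqrt_nonneg (K*n)) hbound
    set w : EuclideanSpace ℝ (↥(G g)) := WithLp.toLp 2 (fun j => v ↑j) with hw_def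
    have hTw := hop w
    have hTw2 : ‖T w‖^2 ≤ 4 * (K * n) * ‖w‖^2 := by
      calc ‖T w‖^2 ≤ (2 * Real.sqrt (K*n) * ‖w‖)^2 :=
            pow_le_pow_left₀ (norm_nonneg _) hTw 2
        _ = 4 * (Real.sqrt (K*n))^2 * ‖w‖^2 := by ring
        _ = 4 * (K*n) * ‖w‖^2 := by rw [Real.sq_sqrt (by positivity)]
    have hLHS : ∑ i, (∑ j ∈ G g, X ω i j * v j) ^ 2 = ‖T w‖^2 := by
      rw [hTnorm]
      refine Finset.sum_congr rfl fun i _ => ?_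
      congr 1
      exact sum_coe_mem (G g) (fun j => X ω i j * v j)
    have hw2 : ‖w‖^2 = ∑ j ∈ G g, v j ^ 2 := by
      rw [euclid_norm_sq, sum_coe_mem (G g) (fun j => v j ^ 2)]
    show (∑ i, (∑ j ∈ G g, X ω i j * v j) ^ 2) / n
        ≤ (2 * Real.sqrt K) ^ 2 * ∑ j ∈ G g, v j ^ 2
    rw [div_le_iff₀ hnR, hLHS]
    have hcsq : (2 * Real.sqrt K)^2 = 4 * K := by
      rw [mul_pow, Real.sq_sqrt hK0.le]
      norm_num
    rw [hcsq]
    calc ‖T w‖^2 ≤ 4*(K*n)*‖w‖^2 := hTw2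
      _ = 4*K*(∑ j ∈ G g, v j ^ 2) * n := by rw [hw2]; ring
  -- final assembly
  have hsub : ENNReal.ofReal (1 - Real.exp (-((1:ℝ) * n))) ≤ P BadAllᶜ := by
    have h1 : ENNReal.ofReal (1 - Real.exp (-((1:ℝ)*n)))
        = 1 - ENNReal.ofReal (Real.exp (-((1:ℝ)*n))) := by
      rw [ENNReal.ofReal_sub _ (Real.exp_nonneg _), ENNReal.ofReal_one]
    rw [h1]
    have h2 : (1:ENNReal) ≤ P BadAll + P BadAllᶜ := by
      calc (1:ENNReal) = P Set.univ := (measure_univ (μ := P)).symm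
        _ = P (BadAll ∪ BadAllᶜ) := by rw [Set.union_compl_self]
        _ ≤ P BadAll + P BadAllᶜ := measure_union_le _ _
    have h3 : 1 - ENNReal.ofReal (Real.exp (-((1:ℝ)*n))) ≤ 1 - P BadAll :=
      tsub_le_tsub_left hBadAllP 1
    exact le_trans h3 (tsub_le_iff_right.mpr (by rwa [add_comm] at h2))
  exact le_trans hsub (le_trans (measure_mono hinc) (le_of_eq rfl))
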